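/- For G = ℤ/2, the group cohomology H⁵(ℤ/2; U(1)) ≅ ℤ/2, and the pullback along the quotient map ℤ/4 → ℤ/2 annihilates H⁵(ℤ/2; U(1)); i.e., the nontrivial degree-5 class of ℤ/2 is trivialized by the extension 1 → ℤ/2 → ℤ/4 → ℤ/2 → 1. -/

import Mathlib

/-- The circle group `U(1) = ℝ/ℤ`. -/
abbrev UOne : Type := AddCircle (1 : ℝ)

/-- Inhomogeneous `n`-cochains on `G` with coefficients in the trivial `G`-module `M`. -/
abbrev cochain (G : Type) [Group G] (M : Type) [AddCommGroup M] (n : ℕ) : Type :=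
  (Fin n → G) → M

/-- The inhomogeneous differential for group cohomology with trivial coefficients. -/
def dFun (G : Type) [Group G] (M : Type) [AddCommGroup M] (n : ℕ)
    (c : cochain G M n) : cochain G M (n + 1) :=
  fun g => c (fun i => g i.succ) +
    ∑ j : Fin (n + 1), ((-1 : ℤ) ^ ((j : ℕ) + 1)) • c (Fin.contractNth j (· * ·) g)

/-- The differential as an additive homomorphism. -/
def dHom (G : Type) [Group G] (M : Type) [AddCommGroup M] (n : ℕ) :
    cochain G M n →+ cochain G M (n + 1) :=
  AddMonoidHom.mk' (dFun G M n) (by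
    intro a b
    funext g
    simp only [dFun, Pi.add_apply, smul_add, Finset.sum_add_distrib]
    abel)

/-- Group cohomology `H^{n+1}(G; M)` with trivial coefficients, defined as
(n+1)-cocycles modulo coboundaries. -/
abbrev groupCohSucc (G : Type) [Group G] (M : Type) [AddCommGroup M] (n : ℕ) : Type :=
  (dHom G M (n + 1)).ker ⧸
    AddSubgroup.comap (dHom G M (n + 1)).ker.subtype (dHom G M n).range

/-- Precomposition of cochains with a group homomorphism. -/
def cochainComp {H G : Type} [Group H] [Group G] (φ : H →* G)
    (M : Type) [AddCommGroup M] (n : ℕ) : cochain G M n →+ cochain H M n :=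
  AddMonoidHom.mk' (fun c => fun x => c (φ ∘ x)) (fun _ _ => rfl)

lemma comp_contractNth {H G : Type} [Group H] [Group G] (φ : H →* G) {n : ℕ}
    (j : Fin (n + 1)) (g : Fin (n + 1) → H) :
    φ ∘ Fin.contractNth j (· * ·) g = Fin.contractNth j (· * ·) (φ ∘ g) := by
  funext i
  simp only [Function.comp_apply, Fin.contractNth]
  split_ifs <;> simp [map_mul]

lemma dFun_comp {H G : Type} [Group H] [Group G] (φ : H →* G)
    (M : Type) [AddCommGroup M] (n : ℕ) (c : cochain G M n) :
    dFun H M n (cochainComp φ M n c) = cochainComp φ M (n + 1) (dFun G M n c) := by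
  funext g
  simp only [dFun, cochainComp, AddMonoidHom.mk'_apply, comp_contractNth]
  rfl

/-- The induced map on cocycles. -/
def cocycleComp {H G : Type} [Group H] [Group G] (φ : H →* G)
    (M : Type) [AddCommGroup M] (n : ℕ) :
    (dHom G M (n + 1)).ker →+ (dHom H M (n + 1)).ker :=
  AddMonoidHom.codRestrict
    ((cochainComp φ M (n + 1)).comp (dHom G M (n + 1)).ker.subtype) _
    (by
      rintro ⟨c, hc⟩
      have hc' : dFun G M (n + 1) c = 0 := hc
      simp only [AddMonoidHom.mem_ker, AddMonoidHom.comp_apply, AddSubgroup.coe_subtype]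
      show dFun H M (n + 1) (cochainComp φ M (n + 1) c) = 0
      rw [dFun_comp, hc']
      rfl)

/-- The map induced on group cohomology `H^{n+1}` by a group homomorphism. -/
def cohMapSucc {H G : Type} [Group H] [Group G] (φ : H →* G)
    (M : Type) [AddCommGroup M] (n : ℕ) :
    groupCohSucc G M n →+ groupCohSucc H M n :=
  QuotientAddGroup.map _ _ (cocycleComp φ M n) (by
    rintro ⟨c, hc⟩ hmem
    obtain ⟨b, hb⟩ := hmem
    refine ⟨cochainComp φ M n b, ?_⟩
    show dFun H M n (cochainComp φ M n b) = cochainComp φ M (n + 1) c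
    rw [dFun_comp]
    exact congrArg (cochainComp φ M (n + 1)) hb)

/-- The canonical reduction homomorphism between cyclic groups `ℤ/b → ℤ/a` for `a ∣ b`,
written multiplicatively. -/
def redHom (a b : ℕ) (h : a ∣ b) : Multiplicative (ZMod b) →* Multiplicative (ZMod a) :=
  AddMonoidHom.toMultiplicative (ZMod.castHom h (ZMod a)).toAddMonoidHom


/-! ### Auxiliary development for statement 11 -/

namespace Stmt11

abbrev Gg : Type := Multiplicative (ZMod 2)
abbrev G4 : Type := Multiplicative (ZMod 4)

def tG : Gg := Multiplicative.ofAdd 1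

/-! #### Encodings of tuples -/

def encG (x : Gg) : ℕ := (Multiplicative.toAdd x).val

lemma encG_lt (x : Gg) : encG x < 2 := ZMod.val_lt _

def enc4 (g : Fin 4 → Gg) : Fin 16 :=
  ⟨encG (g 0) + 2 * encG (g 1) + 4 * encG (g 2) + 8 * encG (g 3), by
    have h0 := encG_lt (g 0); have h1 := encG_lt (g 1); have h2 := encG_lt (g 2)
    have h3 := encG_lt (g 3); omega⟩

def enc5 (g : Fin 5 → Gg) : Fin 32 :=
  ⟨encG (g 0) + 2 * encG (g 1) + 4 * encG (g 2) + 8 * encG (g 3) + 16 * encG (g 4), by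
    have h0 := encG_lt (g 0); have h1 := encG_lt (g 1); have h2 := encG_lt (g 2)
    have h3 := encG_lt (g 3); have h4 := encG_lt (g 4); omega⟩

def enc6 (g : Fin 6 → Gg) : Fin 64 :=
  ⟨encG (g 0) + 2 * encG (g 1) + 4 * encG (g 2) + 8 * encG (g 3) + 16 * encG (g 4)
      + 32 * encG (g 5), by
    have h0 := encG_lt (g 0); have h1 := encG_lt (g 1); have h2 := encG_lt (g 2)
    have h3 := encG_lt (g 3); have h4 := encG_lt (g 4); have h5 := encG_lt (g 5); omega⟩

def dec4 (m : Fin 16) : Fin 4 → Gg := fun i =>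
  Multiplicative.ofAdd (((m : ℕ) / 2 ^ (i : ℕ) : ℕ) : ZMod 2)

def dec5 (m : Fin 32) : Fin 5 → Gg := fun i =>
  Multiplicative.ofAdd (((m : ℕ) / 2 ^ (i : ℕ) : ℕ) : ZMod 2)

def dec6 (m : Fin 64) : Fin 6 → Gg := fun i =>
  Multiplicative.ofAdd (((m : ℕ) / 2 ^ (i : ℕ) : ℕ) : ZMod 2)

lemma decenc4 : ∀ g : Fin 4 → Gg, dec4 (enc4 g) = g := by decide
lemma encdec4 : ∀ m : Fin 16, enc4 (dec4 m) = m := by decide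
lemma decenc5 : ∀ g : Fin 5 → Gg, dec5 (enc5 g) = g := by decide
lemma encdec5 : ∀ m : Fin 32, enc5 (dec5 m) = m := by decide
lemma decenc6 : ∀ g : Fin 6 → Gg, dec6 (enc6 g) = g := by decide
lemma encdec6 : ∀ m : Fin 64, enc6 (dec6 m) = m := by decide

def e4 : (Fin 4 → Gg) ≃ Fin 16 := ⟨enc4, dec4, decenc4, encdec4⟩
def e5 : (Fin 5 → Gg) ≃ Fin 32 := ⟨enc5, dec5, decenc5, encdec5⟩
def e6 : (Fin 6 → Gg) ≃ Fin 64 := ⟨enc6, dec6, decenc6, encdec6⟩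

/-! #### Certificate data (computed from an explicit chain homotopy between the bar
resolution and the minimal periodic resolution of `ℤ` over `ℤ[ℤ/2]`). -/

def zcL : List Int := [-1, 1, -1, 1, 1, -1, 1, -1, -1, 1, -1, 1, 1, -1, 1, -1, 1, -1, 1, -1, -1, 1, -1, 1, 1, -1, 1, -1, -1, 1, -1, 1]

def wcL : List Int := [-1, -1, 1, 1, -1, -1, 1, 1, 1, 1, -1, -1, 1, 1, -1, -1, -1, -1, 1, 1, -1, -1, 1, 1, 1, 1, -1, -1, 1, 1, -1, -1, 1, 1, -1, -1, 1, 1, -1, -1, -1, -1, 1, 1, -1, -1, 1, 1, 1, 1, -1, -1, 1, 1, -1, -1, -1, -1, 1, 1, -1, -1, 1, 1]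

def psiL : List Int := [0, 0, 0, 0, 0, 0, 0, 0, 0, 0, 0, 0, 0, 0, 0, 0, 0, 0, 0, 0, 0, 0, 0, 0, 0, 0, 0, 0, 0, 0, 0, 1]

def HML : List (List Int) := [
 [0, 0, 0, 0, 0, 0, 0, 0, 0, 0, 0, 0, 0, 0, 0, 0, 0, 0, 0, 0, 0, 0, 0, 0, 0, 0, 0, 0, 0, 0, 0, 0],
 [0, -1, 1, 0, 0, 0, 0, 0, 0, 0, 0, 0, 0, 0, 0, 0, 0, 0, 0, 0, 0, 0, 0, 0, 0, 0, 0, 0, 0, 0, 0, 0],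
 [0, 0, 0, 0, 1, 0, 0, 0, -1, 0, 0, 0, 0, 0, 0, 0, 0, 0, 0, 0, 0, 0, 0, 0, 0, 0, 0, 0, 0, 0, 0, 0],
 [1, 0, 0, 0, 0, 0, 0, 0, 0, -1, 1, 0, -1, 0, 0, 0, 0, 0, 0, 0, 0, 0, 0, 0, 0, 0, 0, 0, 0, 0, 0, 0],
 [0, 0, 0, 0, 0, 0, 0, 0, 0, 0, 0, 0, 0, 0, 0, 0, 0, 0, 0, 0, 0, 0, 0, 0, 0, 0, 0, 0, 0, 0, 0, 0],
 [0, 0, 0, 0, 0, 0, 0, 0, 0, -1, 1, 0, 0, 0, 0, 0, 0, 0, 0, 0, 0, 0, 0, 0, 0, 0, 0, 0, 0, 0, 0, 0],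
 [-1, 0, 0, 0, 0, 0, 0, 0, 0, 0, 0, 0, 1, 0, 0, 0, 0, 0, 0, 0, 0, 0, 0, 0, 0, 0, 0, 0, 0, 0, 0, 0],
 [0, 0, 0, 0, 0, 0, 0, -1, 0, 0, 0, 1, 0, -1, 1, 0, 0, 0, 0, 0, 0, 0, 0, 0, 0, 0, 0, 0, 0, 0, 0, 0],
 [-1, 0, 0, 0, 0, 0, 0, 0, 0, 0, 0, 0, 0, 0, 0, 0, 1, 0, 0, 0, 0, 0, 0, 0, 0, 0, 0, 0, 0, 0, 0, 0],
 [0, -1, 1, 0, -1, 0, 0, 0, 0, 0, 0, 0, 0, 0, 0, 0, 0, 0, 0, 0, 1, 0, 0, 0, 0, 0, 0, 0, 0, 0, 0, 0],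
 [0, 0, 0, 0, 0, 0, 0, 0, -1, 0, 0, 0, 0, 0, 0, 0, 0, 0, 0, 0, 1, 0, 0, 0, 0, 0, 0, 0, 0, 0, 0, 0],
 [1, 0, 0, -1, 0, 1, -1, 0, 0, -1, 1, 0, -1, 0, 0, 0, 0, 0, 0, 1, 0, -1, 1, 0, 0, 0, 0, 0, 0, 0, 0, 0],
 [1, 0, 0, 0, 0, 0, 0, 0, 0, 0, 0, 0, 0, 0, 0, 0, -1, 0, 0, 0, 0, 0, 0, 0, 0, 0, 0, 0, 0, 0, 0, 0],
 [0, 1, -1, 0, 1, 0, 0, 0, 0, 0, 0, 0, 0, 0, 0, 0, 0, -1, 1, 0, -1, 0, 0, 0, 0, -1, 1, 0, 0, 0, 0, 0],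
 [0, 0, 0, 0, 0, 0, 0, 0, 1, 0, 0, 0, 0, 0, 0, 0, -1, 0, 0, 0, 0, 0, 0, 0, -1, 0, 0, 0, 1, 0, 0, 0],
 [-1, 1, -1, 1, 1, -1, 1, -1, -1, 1, -1, 1, 1, -1, 1, 0, 1, -1, 1, -1, -1, 1, -1, 0, 1, -1, 1, 0, -1, 0, 0, 0]]

def KML : List (List Int) := [
 [1, 0, 0, 0, 0, 0, 0, 0, 0, 0, 0, 0, 0, 0, 0, 0, 0, 0, 0, 0, 0, 0, 0, 0, 0, 0, 0, 0, 0, 0, 0, 0, 0, 0, 0, 0, 0, 0, 0, 0, 0, 0, 0, 0, 0, 0, 0, 0, 0, 0, 0, 0, 0, 0, 0, 0, 0, 0, 0, 0, 0, 0, 0, 0],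
 [0, 0, 0, 0, 1, 0, 0, 0, 0, 0, 0, 0, 0, 0, 0, 0, 0, 0, 0, 0, 0, 0, 0, 0, 0, 0, 0, 0, 0, 0, 0, 0, 0, 0, 0, 0, 0, 0, 0, 0, 0, 0, 0, 0, 0, 0, 0, 0, 0, 0, 0, 0, 0, 0, 0, 0, 0, 0, 0, 0, 0, 0, 0, 0],
 [0, 0, 0, 0, 1, 0, 0, 0, 0, 0, 0, 0, 0, 0, 0, 0, 0, 0, 0, 0, 0, 0, 0, 0, 0, 0, 0, 0, 0, 0, 0, 0, 0, 0, 0, 0, 0, 0, 0, 0, 0, 0, 0, 0, 0, 0, 0, 0, 0, 0, 0, 0, 0, 0, 0, 0, 0, 0, 0, 0, 0, 0, 0, 0],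
 [0, 0, 0, 1, 0, -1, 1, 0, 0, 0, 0, 0, 0, 0, 0, 0, 0, 0, 0, 0, 0, 0, 0, 0, 0, 0, 0, 0, 0, 0, 0, 0, 0, 0, 0, 0, 0, 0, 0, 0, 0, 0, 0, 0, 0, 0, 0, 0, 0, 0, 0, 0, 0, 0, 0, 0, 0, 0, 0, 0, 0, 0, 0, 0],
 [0, 0, 0, 0, 0, 0, 0, 0, 0, 0, 0, 0, 0, 0, 0, 0, 1, 0, 0, 0, 0, 0, 0, 0, 0, 0, 0, 0, 0, 0, 0, 0, 0, 0, 0, 0, 0, 0, 0, 0, 0, 0, 0, 0, 0, 0, 0, 0, 0, 0, 0, 0, 0, 0, 0, 0, 0, 0, 0, 0, 0, 0, 0, 0],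
 [0, 0, 0, 0, 0, 0, 0, 0, 0, -1, 1, 0, 0, 0, 0, 0, 0, 1, -1, 0, 1, 0, 0, 0, 0, 0, 0, 0, 0, 0, 0, 0, 0, 0, 0, 0, 0, 0, 0, 0, 0, 0, 0, 0, 0, 0, 0, 0, 0, 0, 0, 0, 0, 0, 0, 0, 0, 0, 0, 0, 0, 0, 0, 0],
 [-1, 0, 0, 0, 0, 0, 0, 0, 0, 0, 0, 0, 1, 0, 0, 0, 0, 0, 0, 0, 0, 0, 0, 0, 1, 0, 0, 0, 0, 0, 0, 0, 0, 0, 0, 0, 0, 0, 0, 0, 0, 0, 0, 0, 0, 0, 0, 0, 0, 0, 0, 0, 0, 0, 0, 0, 0, 0, 0, 0, 0, 0, 0, 0],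
 [0, -1, 1, 0, -1, 0, 0, 0, 1, 0, 0, 0, 0, 0, 0, 0, -1, 0, 0, 1, 0, -1, 1, 0, 0, 1, -1, 0, 1, 0, 0, 0, 0, 0, 0, 0, 0, 0, 0, 0, 0, 0, 0, 0, 0, 0, 0, 0, 0, 0, 0, 0, 0, 0, 0, 0, 0, 0, 0, 0, 0, 0, 0, 0],
 [0, 0, 0, 0, 0, 0, 0, 0, 0, 0, 0, 0, 0, 0, 0, 0, 1, 0, 0, 0, 0, 0, 0, 0, 0, 0, 0, 0, 0, 0, 0, 0, 0, 0, 0, 0, 0, 0, 0, 0, 0, 0, 0, 0, 0, 0, 0, 0, 0, 0, 0, 0, 0, 0, 0, 0, 0, 0, 0, 0, 0, 0, 0, 0],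
 [0, 0, 0, 0, 0, 0, 0, 0, 0, 0, 0, 0, 0, 0, 0, 0, 0, 0, 0, 0, 1, 0, 0, 0, 0, 0, 0, 0, 0, 0, 0, 0, 0, 0, 0, 0, 0, 0, 0, 0, 0, 0, 0, 0, 0, 0, 0, 0, 0, 0, 0, 0, 0, 0, 0, 0, 0, 0, 0, 0, 0, 0, 0, 0],
 [0, 0, 0, 0, 0, 0, 0, 0, 0, 0, 0, 0, 0, 0, 0, 0, 0, 0, 0, 0, 1, 0, 0, 0, 0, 0, 0, 0, 0, 0, 0, 0, 0, 0, 0, 0, 0, 0, 0, 0, 0, 0, 0, 0, 0, 0, 0, 0, 0, 0, 0, 0, 0, 0, 0, 0, 0, 0, 0, 0, 0, 0, 0, 0],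
 [0, 0, 0, 0, 0, 0, 0, 0, 0, 0, 0, 0, 0, 0, 0, 0, 0, 0, 0, 1, 0, -1, 1, 0, 0, 0, 0, 0, 0, 0, 0, 0, 0, 0, 0, 0, 0, 0, 0, 0, 0, 0, 0, 0, 0, 0, 0, 0, 0, 0, 0, 0, 0, 0, 0, 0, 0, 0, 0, 0, 0, 0, 0, 0],
 [1, 0, 0, 0, 0, 0, 0, 0, 0, 0, 0, 0, 0, 0, 0, 0, 0, 0, 0, 0, 0, 0, 0, 0, 0, 0, 0, 0, 0, 0, 0, 0, 0, 0, 0, 0, 0, 0, 0, 0, 0, 0, 0, 0, 0, 0, 0, 0, 0, 0, 0, 0, 0, 0, 0, 0, 0, 0, 0, 0, 0, 0, 0, 0],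
 [0, 1, -1, 0, 1, 0, 0, 0, 0, 0, 0, 0, 0, 0, 0, 0, 0, 0, 0, 0, 0, 0, 0, 0, 0, -1, 1, 0, 0, 0, 0, 0, 0, 0, 0, 0, 0, 0, 0, 0, 0, 0, 0, 0, 0, 0, 0, 0, 0, 0, 0, 0, 0, 0, 0, 0, 0, 0, 0, 0, 0, 0, 0, 0],
 [0, 0, 0, 0, 0, 0, 0, 0, 1, 0, 0, 0, 0, 0, 0, 0, -1, 0, 0, 0, 0, 0, 0, 0, 0, 0, 0, 0, 1, 0, 0, 0, 0, 0, 0, 0, 0, 0, 0, 0, 0, 0, 0, 0, 0, 0, 0, 0, 0, 0, 0, 0, 0, 0, 0, 0, 0, 0, 0, 0, 0, 0, 0, 0],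
 [0, 0, 0, 0, 0, 0, 0, 0, 0, 0, 0, 0, 0, 0, 0, 1, 0, 0, 0, 0, 0, 0, 0, -1, 0, 0, 0, 1, 0, -1, 1, 0, 0, 0, 0, 0, 0, 0, 0, 0, 0, 0, 0, 0, 0, 0, 0, 0, 0, 0, 0, 0, 0, 0, 0, 0, 0, 0, 0, 0, 0, 0, 0, 0],
 [1, 0, 0, 0, 0, 0, 0, 0, 0, 0, 0, 0, 0, 0, 0, 0, 0, 0, 0, 0, 0, 0, 0, 0, 0, 0, 0, 0, 0, 0, 0, 0, 0, 0, 0, 0, 0, 0, 0, 0, 0, 0, 0, 0, 0, 0, 0, 0, 0, 0, 0, 0, 0, 0, 0, 0, 0, 0, 0, 0, 0, 0, 0, 0],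
 [0, 1, -1, 0, 1, 0, 0, 0, 0, 0, 0, 0, 0, 0, 0, 0, 0, 0, 0, 0, 0, 0, 0, 0, 0, 0, 0, 0, 0, 0, 0, 0, 0, -1, 1, 0, 0, 0, 0, 0, 0, 0, 0, 0, 0, 0, 0, 0, 0, 0, 0, 0, 0, 0, 0, 0, 0, 0, 0, 0, 0, 0, 0, 0],
 [0, 0, 0, 0, 0, 0, 0, 0, 1, 0, 0, 0, 0, 0, 0, 0, 0, 0, 0, 0, 0, 0, 0, 0, 0, 0, 0, 0, 0, 0, 0, 0, 0, 0, 0, 0, 1, 0, 0, 0, -1, 0, 0, 0, 0, 0, 0, 0, 0, 0, 0, 0, 0, 0, 0, 0, 0, 0, 0, 0, 0, 0, 0, 0],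
 [-1, 0, 0, 1, 0, -1, 1, 0, 0, 1, -1, 0, 1, 0, 0, 0, 0, 0, 0, 0, 0, 0, 0, 0, 0, 0, 0, 0, 0, 0, 0, 0, 1, 0, 0, 0, 0, 0, 0, 0, 0, -1, 1, 0, -1, 0, 0, 0, 0, 0, 0, 0, 0, 0, 0, 0, 0, 0, 0, 0, 0, 0, 0, 0],
 [0, 0, 0, 0, 0, 0, 0, 0, 0, 0, 0, 0, 0, 0, 0, 0, 1, 0, 0, 0, 0, 0, 0, 0, 0, 0, 0, 0, 0, 0, 0, 0, 0, 0, 0, 0, 0, 0, 0, 0, 0, 0, 0, 0, 0, 0, 0, 0, 0, 0, 0, 0, 0, 0, 0, 0, 0, 0, 0, 0, 0, 0, 0, 0],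
 [0, 0, 0, 0, 0, 0, 0, 0, 0, 0, 0, 0, 0, 0, 0, 0, 0, 1, -1, 0, 1, 0, 0, 0, 0, 0, 0, 0, 0, 0, 0, 0, 0, 0, 0, 0, 0, 0, 0, 0, 0, -1, 1, 0, 0, 0, 0, 0, 0, 0, 0, 0, 0, 0, 0, 0, 0, 0, 0, 0, 0, 0, 0, 0],
 [0, 0, 0, 0, 0, 0, 0, 0, 0, 0, 0, 0, 0, 0, 0, 0, 0, 0, 0, 0, 0, 0, 0, 0, 1, 0, 0, 0, 0, 0, 0, 0, -1, 0, 0, 0, 0, 0, 0, 0, 0, 0, 0, 0, 1, 0, 0, 0, 0, 0, 0, 0, 0, 0, 0, 0, 0, 0, 0, 0, 0, 0, 0, 0],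
 [0, -1, 1, 0, -1, 0, 0, 1, 1, 0, 0, -1, 0, 1, -1, 0, -1, 0, 0, 1, 0, -1, 1, 0, 0, 1, -1, 0, 1, 0, 0, 0, 0, 0, 0, 0, 0, 0, 0, -1, 0, 0, 0, 1, 0, -1, 1, 0, 0, 0, 0, 0, 0, 0, 0, 0, 0, 0, 0, 0, 0, 0, 0, 0],
 [-1, 0, 0, 0, 0, 0, 0, 0, 0, 0, 0, 0, 0, 0, 0, 0, 0, 0, 0, 0, 0, 0, 0, 0, 0, 0, 0, 0, 0, 0, 0, 0, 1, 0, 0, 0, 0, 0, 0, 0, 0, 0, 0, 0, 0, 0, 0, 0, 1, 0, 0, 0, 0, 0, 0, 0, 0, 0, 0, 0, 0, 0, 0, 0],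
 [0, -1, 1, 0, -1, 0, 0, 0, 0, 0, 0, 0, 0, 0, 0, 0, 0, 0, 0, 0, 0, 0, 0, 0, 0, 0, 0, 0, 0, 0, 0, 0, 0, 1, -1, 0, 1, 0, 0, 0, 0, 0, 0, 0, 0, 0, 0, 0, 0, 0, 0, 0, 1, 0, 0, 0, 0, 0, 0, 0, 0, 0, 0, 0],
 [0, 0, 0, 0, 0, 0, 0, 0, -1, 0, 0, 0, 0, 0, 0, 0, 0, 0, 0, 0, 0, 0, 0, 0, 0, 0, 0, 0, 0, 0, 0, 0, 0, 0, 0, 0, 0, 0, 0, 0, 1, 0, 0, 0, 0, 0, 0, 0, 0, 0, 0, 0, 1, 0, 0, 0, 0, 0, 0, 0, 0, 0, 0, 0],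
 [1, 0, 0, -1, 0, 1, -1, 0, 0, -1, 1, 0, -1, 0, 0, 0, 0, 0, 0, 0, 0, 0, 0, 0, 0, 0, 0, 0, 0, 0, 0, 0, -1, 0, 0, 1, 0, -1, 1, 0, 0, 1, -1, 0, 1, 0, 0, 0, 0, 0, 0, 1, 0, -1, 1, 0, 0, 0, 0, 0, 0, 0, 0, 0],
 [0, 0, 0, 0, 0, 0, 0, 0, 0, 0, 0, 0, 0, 0, 0, 0, -1, 0, 0, 0, 0, 0, 0, 0, 0, 0, 0, 0, 0, 0, 0, 0, 1, 0, 0, 0, 0, 0, 0, 0, 0, 0, 0, 0, 0, 0, 0, 0, 1, 0, 0, 0, 0, 0, 0, 0, 0, 0, 0, 0, 0, 0, 0, 0],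
 [0, 0, 0, 0, 0, 0, 0, 0, 0, 0, 0, 0, 0, 0, 0, 0, 0, -1, 1, 0, -1, 0, 0, 0, 0, 0, 0, 0, 0, 0, 0, 0, 0, 1, -1, 0, 1, 0, 0, 0, 0, 0, 0, 0, 0, 0, 0, 0, 0, 1, -1, 0, 1, 0, 0, 0, 0, -1, 1, 0, 0, 0, 0, 0],
 [0, 0, 0, 0, 0, 0, 0, 0, 0, 0, 0, 0, 0, 0, 0, 0, 0, 0, 0, 0, 0, 0, 0, 0, -1, 0, 0, 0, 0, 0, 0, 0, 0, 0, 0, 0, 0, 0, 0, 0, 1, 0, 0, 0, 0, 0, 0, 0, -1, 0, 0, 0, 0, 0, 0, 0, 1, 0, 0, 0, 1, 0, 0, 0],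
 [1, 1, -1, -1, 1, 1, -1, -1, -1, -1, 1, 1, -1, -1, 1, 1, 1, 1, -1, -1, 1, 1, -1, -1, -1, -1, 1, 1, -1, -1, 1, 0, -1, -1, 1, 1, -1, -1, 1, 1, 1, 1, -1, -1, 1, 1, -1, 0, -1, -1, 1, 1, -1, -1, 1, 0, 1, 1, -1, 0, 1, 0, 0, 0]]

def CD4L : List (List Int) := [
 [0, 0, 0, 0, 0, 0, 0, 0, 0, 0, 0, 0, 0, 0, 0, 0],
 [1, -1, 0, 0, 0, 0, 0, 0, 0, 0, 0, 0, 0, 0, 0, 0],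
 [0, 0, 0, 0, 0, 0, 0, 0, 0, 0, 0, 0, 0, 0, 0, 0],
 [-1, 1, 0, 0, 0, 0, 0, 0, 0, 0, 0, 0, 0, 0, 0, 0],
 [0, 0, 1, 0, -1, 0, 0, 0, 0, 0, 0, 0, 0, 0, 0, 0],
 [0, 0, 1, 0, 0, -1, 0, 0, 0, 0, 0, 0, 0, 0, 0, 0],
 [1, 0, 0, 0, 0, 0, -1, 0, 0, 0, 0, 0, 0, 0, 0, 0],
 [0, 1, -1, 1, 0, 0, 0, -1, 0, 0, 0, 0, 0, 0, 0, 0],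
 [0, 0, 0, 0, 0, 0, 0, 0, 0, 0, 0, 0, 0, 0, 0, 0],
 [0, 0, 0, 0, 1, -1, 0, 0, 0, 0, 0, 0, 0, 0, 0, 0],
 [0, 0, 0, 0, 0, 0, 0, 0, 0, 0, 0, 0, 0, 0, 0, 0],
 [0, 0, 0, 0, -1, 1, 0, 0, 0, 0, 0, 0, 0, 0, 0, 0],
 [-1, 0, 0, 0, 0, 0, 1, 0, 0, 0, 0, 0, 0, 0, 0, 0],
 [0, -1, 0, 0, 0, 0, 1, 0, 0, 0, 0, 0, 0, 0, 0, 0],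
 [0, 0, -1, 0, 1, 0, 0, 0, 0, 0, 0, 0, 0, 0, 0, 0],
 [0, 0, 0, -1, 0, 1, -1, 1, 0, 0, 0, 0, 0, 0, 0, 0],
 [-1, 0, 0, 0, 0, 0, 0, 0, 1, 0, 0, 0, 0, 0, 0, 0],
 [0, -1, 0, 0, 0, 0, 0, 0, 1, 0, 0, 0, 0, 0, 0, 0],
 [0, 0, -1, 0, 0, 0, 0, 0, 0, 0, 1, 0, 0, 0, 0, 0],
 [0, 0, 0, -1, 0, 0, 0, 0, -1, 1, 0, 1, 0, 0, 0, 0],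
 [0, 0, 0, 0, -1, 0, 0, 0, 0, 0, 1, 0, 0, 0, 0, 0],
 [0, 0, 0, 0, 0, -1, 0, 0, 0, 0, 1, 0, 0, 0, 0, 0],
 [0, 0, 0, 0, 0, 0, -1, 0, 1, 0, 0, 0, 0, 0, 0, 0],
 [0, 0, 0, 0, 0, 0, 0, -1, 0, 1, -1, 1, 0, 0, 0, 0],
 [1, 0, 0, 0, 0, 0, 0, 0, -1, 0, 0, 0, 0, 0, 0, 0],
 [0, 1, 0, 0, 0, 0, 0, 0, 0, -1, 0, 0, 1, -1, 0, 0],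
 [0, 0, 1, 0, 0, 0, 0, 0, 0, 0, -1, 0, 0, 0, 0, 0],
 [0, 0, 0, 1, 0, 0, 0, 0, 0, 0, 0, -1, -1, 1, 0, 0],
 [0, 0, 0, 0, 1, 0, 0, 0, -1, 0, 0, 0, -1, 0, 1, 0],
 [0, 0, 0, 0, 0, 1, 0, 0, 0, -1, 0, 0, 0, -1, 1, 0],
 [0, 0, 0, 0, 0, 0, 1, 0, 0, 0, -1, 0, 1, 0, -1, 0],
 [0, 0, 0, 0, 0, 0, 0, 1, 0, 0, 0, -1, 0, 1, -1, 0]]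

def CD5L : List (List Int) := [
 [1, 0, 0, 0, 0, 0, 0, 0, 0, 0, 0, 0, 0, 0, 0, 0, 0, 0, 0, 0, 0, 0, 0, 0, 0, 0, 0, 0, 0, 0, 0, 0],
 [1, 0, 0, 0, 0, 0, 0, 0, 0, 0, 0, 0, 0, 0, 0, 0, 0, 0, 0, 0, 0, 0, 0, 0, 0, 0, 0, 0, 0, 0, 0, 0],
 [0, 0, 1, 0, 0, 0, 0, 0, 0, 0, 0, 0, 0, 0, 0, 0, 0, 0, 0, 0, 0, 0, 0, 0, 0, 0, 0, 0, 0, 0, 0, 0],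
 [-1, 1, 0, 1, 0, 0, 0, 0, 0, 0, 0, 0, 0, 0, 0, 0, 0, 0, 0, 0, 0, 0, 0, 0, 0, 0, 0, 0, 0, 0, 0, 0],
 [0, 0, 1, 0, 0, 0, 0, 0, 0, 0, 0, 0, 0, 0, 0, 0, 0, 0, 0, 0, 0, 0, 0, 0, 0, 0, 0, 0, 0, 0, 0, 0],
 [0, 0, 1, 0, 0, 0, 0, 0, 0, 0, 0, 0, 0, 0, 0, 0, 0, 0, 0, 0, 0, 0, 0, 0, 0, 0, 0, 0, 0, 0, 0, 0],
 [1, 0, 0, 0, 0, 0, 0, 0, 0, 0, 0, 0, 0, 0, 0, 0, 0, 0, 0, 0, 0, 0, 0, 0, 0, 0, 0, 0, 0, 0, 0, 0],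
 [0, 1, -1, 1, 0, 0, 0, 0, 0, 0, 0, 0, 0, 0, 0, 0, 0, 0, 0, 0, 0, 0, 0, 0, 0, 0, 0, 0, 0, 0, 0, 0],
 [0, 0, 0, 0, 0, 0, 0, 0, 1, 0, 0, 0, 0, 0, 0, 0, 0, 0, 0, 0, 0, 0, 0, 0, 0, 0, 0, 0, 0, 0, 0, 0],
 [0, 0, 0, 0, 1, -1, 0, 0, 0, 1, 0, 0, 0, 0, 0, 0, 0, 0, 0, 0, 0, 0, 0, 0, 0, 0, 0, 0, 0, 0, 0, 0],
 [0, 0, 0, 0, 0, 0, 0, 0, 0, 0, 1, 0, 0, 0, 0, 0, 0, 0, 0, 0, 0, 0, 0, 0, 0, 0, 0, 0, 0, 0, 0, 0],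
 [0, 0, 0, 0, -1, 1, 0, 0, 0, 0, 0, 1, 0, 0, 0, 0, 0, 0, 0, 0, 0, 0, 0, 0, 0, 0, 0, 0, 0, 0, 0, 0],
 [-1, 0, 0, 0, 0, 0, 1, 0, 0, 0, 0, 0, 1, 0, 0, 0, 0, 0, 0, 0, 0, 0, 0, 0, 0, 0, 0, 0, 0, 0, 0, 0],
 [0, -1, 0, 0, 0, 0, 1, 0, 0, 0, 0, 0, 0, 1, 0, 0, 0, 0, 0, 0, 0, 0, 0, 0, 0, 0, 0, 0, 0, 0, 0, 0],
 [0, 0, -1, 0, 1, 0, 0, 0, 0, 0, 0, 0, 0, 0, 1, 0, 0, 0, 0, 0, 0, 0, 0, 0, 0, 0, 0, 0, 0, 0, 0, 0],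
 [0, 0, 0, -1, 0, 1, -1, 1, 0, 0, 0, 0, 0, 0, 0, 1, 0, 0, 0, 0, 0, 0, 0, 0, 0, 0, 0, 0, 0, 0, 0, 0],
 [0, 0, 0, 0, 0, 0, 0, 0, 1, 0, 0, 0, 0, 0, 0, 0, 0, 0, 0, 0, 0, 0, 0, 0, 0, 0, 0, 0, 0, 0, 0, 0],
 [0, 0, 0, 0, 0, 0, 0, 0, 1, 0, 0, 0, 0, 0, 0, 0, 0, 0, 0, 0, 0, 0, 0, 0, 0, 0, 0, 0, 0, 0, 0, 0],
 [0, 0, 0, 0, 0, 0, 0, 0, 0, 0, 1, 0, 0, 0, 0, 0, 0, 0, 0, 0, 0, 0, 0, 0, 0, 0, 0, 0, 0, 0, 0, 0],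
 [0, 0, 0, 0, 0, 0, 0, 0, -1, 1, 0, 1, 0, 0, 0, 0, 0, 0, 0, 0, 0, 0, 0, 0, 0, 0, 0, 0, 0, 0, 0, 0],
 [0, 0, 0, 0, 0, 0, 0, 0, 0, 0, 1, 0, 0, 0, 0, 0, 0, 0, 0, 0, 0, 0, 0, 0, 0, 0, 0, 0, 0, 0, 0, 0],
 [0, 0, 0, 0, 0, 0, 0, 0, 0, 0, 1, 0, 0, 0, 0, 0, 0, 0, 0, 0, 0, 0, 0, 0, 0, 0, 0, 0, 0, 0, 0, 0],
 [0, 0, 0, 0, 0, 0, 0, 0, 1, 0, 0, 0, 0, 0, 0, 0, 0, 0, 0, 0, 0, 0, 0, 0, 0, 0, 0, 0, 0, 0, 0, 0],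
 [0, 0, 0, 0, 0, 0, 0, 0, 0, 1, -1, 1, 0, 0, 0, 0, 0, 0, 0, 0, 0, 0, 0, 0, 0, 0, 0, 0, 0, 0, 0, 0],
 [1, 0, 0, 0, 0, 0, 0, 0, 0, 0, 0, 0, 0, 0, 0, 0, 0, 0, 0, 0, 0, 0, 0, 0, 0, 0, 0, 0, 0, 0, 0, 0],
 [0, 1, 0, 0, 0, 0, 0, 0, 0, 0, 0, 0, 1, -1, 0, 0, 0, 0, 0, 0, 0, 0, 0, 0, 0, 0, 0, 0, 0, 0, 0, 0],
 [0, 0, 1, 0, 0, 0, 0, 0, 0, 0, 0, 0, 0, 0, 0, 0, 0, 0, 0, 0, 0, 0, 0, 0, 0, 0, 0, 0, 0, 0, 0, 0],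
 [0, 0, 0, 1, 0, 0, 0, 0, 0, 0, 0, 0, -1, 1, 0, 0, 0, 0, 0, 0, 0, 0, 0, 0, 0, 0, 0, 0, 0, 0, 0, 0],
 [0, 0, 0, 0, 1, 0, 0, 0, -1, 0, 0, 0, 0, 0, 1, 0, 0, 0, 0, 0, 0, 0, 0, 0, 0, 0, 0, 0, 0, 0, 0, 0],
 [0, 0, 0, 0, 0, 1, 0, 0, 0, -1, 0, 0, 0, 0, 1, 0, 0, 0, 0, 0, 0, 0, 0, 0, 0, 0, 0, 0, 0, 0, 0, 0],
 [0, 0, 0, 0, 0, 0, 1, 0, 0, 0, -1, 0, 1, 0, 0, 0, 0, 0, 0, 0, 0, 0, 0, 0, 0, 0, 0, 0, 0, 0, 0, 0],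
 [0, 0, 0, 0, 0, 0, 0, 1, 0, 0, 0, -1, 0, 1, -1, 1, 0, 0, 0, 0, 0, 0, 0, 0, 0, 0, 0, 0, 0, 0, 0, 0],
 [1, 0, 0, 0, 0, 0, 0, 0, 0, 0, 0, 0, 0, 0, 0, 0, 0, 0, 0, 0, 0, 0, 0, 0, 0, 0, 0, 0, 0, 0, 0, 0],
 [0, 1, 0, 0, 0, 0, 0, 0, 0, 0, 0, 0, 0, 0, 0, 0, 1, -1, 0, 0, 0, 0, 0, 0, 0, 0, 0, 0, 0, 0, 0, 0],
 [0, 0, 1, 0, 0, 0, 0, 0, 0, 0, 0, 0, 0, 0, 0, 0, 0, 0, 0, 0, 0, 0, 0, 0, 0, 0, 0, 0, 0, 0, 0, 0],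
 [0, 0, 0, 1, 0, 0, 0, 0, 0, 0, 0, 0, 0, 0, 0, 0, -1, 1, 0, 0, 0, 0, 0, 0, 0, 0, 0, 0, 0, 0, 0, 0],
 [0, 0, 0, 0, 1, 0, 0, 0, 0, 0, 0, 0, 0, 0, 0, 0, 0, 0, 1, 0, -1, 0, 0, 0, 0, 0, 0, 0, 0, 0, 0, 0],
 [0, 0, 0, 0, 0, 1, 0, 0, 0, 0, 0, 0, 0, 0, 0, 0, 0, 0, 1, 0, 0, -1, 0, 0, 0, 0, 0, 0, 0, 0, 0, 0],
 [0, 0, 0, 0, 0, 0, 1, 0, 0, 0, 0, 0, 0, 0, 0, 0, 1, 0, 0, 0, 0, 0, -1, 0, 0, 0, 0, 0, 0, 0, 0, 0],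
 [0, 0, 0, 0, 0, 0, 0, 1, 0, 0, 0, 0, 0, 0, 0, 0, 0, 1, -1, 1, 0, 0, 0, -1, 0, 0, 0, 0, 0, 0, 0, 0],
 [0, 0, 0, 0, 0, 0, 0, 0, 1, 0, 0, 0, 0, 0, 0, 0, 0, 0, 0, 0, 0, 0, 0, 0, 0, 0, 0, 0, 0, 0, 0, 0],
 [0, 0, 0, 0, 0, 0, 0, 0, 0, 1, 0, 0, 0, 0, 0, 0, 0, 0, 0, 0, 1, -1, 0, 0, 0, 0, 0, 0, 0, 0, 0, 0],
 [0, 0, 0, 0, 0, 0, 0, 0, 0, 0, 1, 0, 0, 0, 0, 0, 0, 0, 0, 0, 0, 0, 0, 0, 0, 0, 0, 0, 0, 0, 0, 0],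
 [0, 0, 0, 0, 0, 0, 0, 0, 0, 0, 0, 1, 0, 0, 0, 0, 0, 0, 0, 0, -1, 1, 0, 0, 0, 0, 0, 0, 0, 0, 0, 0],
 [0, 0, 0, 0, 0, 0, 0, 0, 0, 0, 0, 0, 1, 0, 0, 0, -1, 0, 0, 0, 0, 0, 1, 0, 0, 0, 0, 0, 0, 0, 0, 0],
 [0, 0, 0, 0, 0, 0, 0, 0, 0, 0, 0, 0, 0, 1, 0, 0, 0, -1, 0, 0, 0, 0, 1, 0, 0, 0, 0, 0, 0, 0, 0, 0],
 [0, 0, 0, 0, 0, 0, 0, 0, 0, 0, 0, 0, 0, 0, 1, 0, 0, 0, -1, 0, 1, 0, 0, 0, 0, 0, 0, 0, 0, 0, 0, 0],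
 [0, 0, 0, 0, 0, 0, 0, 0, 0, 0, 0, 0, 0, 0, 0, 1, 0, 0, 0, -1, 0, 1, -1, 1, 0, 0, 0, 0, 0, 0, 0, 0],
 [-1, 0, 0, 0, 0, 0, 0, 0, 0, 0, 0, 0, 0, 0, 0, 0, 1, 0, 0, 0, 0, 0, 0, 0, 1, 0, 0, 0, 0, 0, 0, 0],
 [0, -1, 0, 0, 0, 0, 0, 0, 0, 0, 0, 0, 0, 0, 0, 0, 0, 1, 0, 0, 0, 0, 0, 0, 1, 0, 0, 0, 0, 0, 0, 0],
 [0, 0, -1, 0, 0, 0, 0, 0, 0, 0, 0, 0, 0, 0, 0, 0, 0, 0, 1, 0, 0, 0, 0, 0, 0, 0, 1, 0, 0, 0, 0, 0],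
 [0, 0, 0, -1, 0, 0, 0, 0, 0, 0, 0, 0, 0, 0, 0, 0, 0, 0, 0, 1, 0, 0, 0, 0, -1, 1, 0, 1, 0, 0, 0, 0],
 [0, 0, 0, 0, -1, 0, 0, 0, 0, 0, 0, 0, 0, 0, 0, 0, 0, 0, 0, 0, 1, 0, 0, 0, 0, 0, 1, 0, 0, 0, 0, 0],
 [0, 0, 0, 0, 0, -1, 0, 0, 0, 0, 0, 0, 0, 0, 0, 0, 0, 0, 0, 0, 0, 1, 0, 0, 0, 0, 1, 0, 0, 0, 0, 0],
 [0, 0, 0, 0, 0, 0, -1, 0, 0, 0, 0, 0, 0, 0, 0, 0, 0, 0, 0, 0, 0, 0, 1, 0, 1, 0, 0, 0, 0, 0, 0, 0],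
 [0, 0, 0, 0, 0, 0, 0, -1, 0, 0, 0, 0, 0, 0, 0, 0, 0, 0, 0, 0, 0, 0, 0, 1, 0, 1, -1, 1, 0, 0, 0, 0],
 [0, 0, 0, 0, 0, 0, 0, 0, -1, 0, 0, 0, 0, 0, 0, 0, 1, 0, 0, 0, 0, 0, 0, 0, 1, 0, 0, 0, 0, 0, 0, 0],
 [0, 0, 0, 0, 0, 0, 0, 0, 0, -1, 0, 0, 0, 0, 0, 0, 0, 1, 0, 0, 0, 0, 0, 0, 0, 1, 0, 0, 1, -1, 0, 0],
 [0, 0, 0, 0, 0, 0, 0, 0, 0, 0, -1, 0, 0, 0, 0, 0, 0, 0, 1, 0, 0, 0, 0, 0, 0, 0, 1, 0, 0, 0, 0, 0],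
 [0, 0, 0, 0, 0, 0, 0, 0, 0, 0, 0, -1, 0, 0, 0, 0, 0, 0, 0, 1, 0, 0, 0, 0, 0, 0, 0, 1, -1, 1, 0, 0],
 [0, 0, 0, 0, 0, 0, 0, 0, 0, 0, 0, 0, -1, 0, 0, 0, 0, 0, 0, 0, 1, 0, 0, 0, -1, 0, 0, 0, 1, 0, 1, 0],
 [0, 0, 0, 0, 0, 0, 0, 0, 0, 0, 0, 0, 0, -1, 0, 0, 0, 0, 0, 0, 0, 1, 0, 0, 0, -1, 0, 0, 0, 1, 1, 0],
 [0, 0, 0, 0, 0, 0, 0, 0, 0, 0, 0, 0, 0, 0, -1, 0, 0, 0, 0, 0, 0, 0, 1, 0, 0, 0, -1, 0, 1, 0, 1, 0],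
 [0, 0, 0, 0, 0, 0, 0, 0, 0, 0, 0, 0, 0, 0, 0, -1, 0, 0, 0, 0, 0, 0, 0, 1, 0, 0, 0, -1, 0, 1, -1, 2]]

def b2L : List Nat := [0, 0, 0, 0, 0, 0, 0, 0, 0, 0, 0, 0, 0, 0, 0, 0, 0, 0, 0, 0, 0, 0, 0, 0, 0, 0, 0, 0, 0, 0, 0, 0, 0, 0, 0, 0, 0, 0, 0, 0, 0, 0, 0, 0, 0, 0, 0, 0, 0, 0, 0, 0, 0, 0, 0, 0, 0, 0, 0, 0, 0, 0, 0, 0, 0, 0, 0, 0, 0, 0, 0, 0, 0, 0, 0, 0, 0, 0, 0, 0, 0, 0, 0, 0, 0, 1, 1, 0, 0, 0, 0, 0, 0, 1, 1, 0, 0, 0, 0, 0, 0, 0, 0, 0, 0, 0, 0, 0, 0, 0, 0, 0, 0, 0, 0, 0, 0, 1, 1, 0, 0, 0, 0, 0, 0, 1, 1, 0, 0, 0, 0, 0, 0, 0, 0, 0, 0, 0, 0, 0, 0, 0, 0, 0, 0, 0, 0, 0, 0, 0, 0, 0, 0, 0, 0, 0, 0, 0, 0, 0, 0, 0, 0, 0,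 0, 0, 0, 0, 0, 0, 0, 0, 0, 0, 0, 0, 0, 0, 0, 0, 0, 0, 0, 0, 0, 0, 0, 0, 0, 0, 0, 0, 0, 0, 0, 0, 0, 0, 0, 0, 0, 0, 0, 0, 0, 0, 0, 0, 0, 0, 0, 0, 0, 1, 1, 0, 0, 0, 0, 0, 0, 1, 1, 0, 0, 0, 0, 0, 0, 0, 0, 0, 0, 0, 0, 0, 0, 0, 0, 0, 0, 0, 0, 0, 0, 1, 1, 0, 0, 0, 0, 0, 0, 1, 1, 0]


def b2LL : List (List Nat) := [
 [0, 0, 0, 0, 0, 0, 0, 0, 0, 0, 0, 0, 0, 0, 0, 0],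
 [0, 0, 0, 0, 0, 0, 0, 0, 0, 0, 0, 0, 0, 0, 0, 0],
 [0, 0, 0, 0, 0, 0, 0, 0, 0, 0, 0, 0, 0, 0, 0, 0],
 [0, 0, 0, 0, 0, 0, 0, 0, 0, 0, 0, 0, 0, 0, 0, 0],
 [0, 0, 0, 0, 0, 0, 0, 0, 0, 0, 0, 0, 0, 0, 0, 0],
 [0, 0, 0, 0, 0, 1, 1, 0, 0, 0, 0, 0, 0, 1, 1, 0],
 [0, 0, 0, 0, 0, 0, 0, 0, 0, 0, 0, 0, 0, 0, 0, 0],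
 [0, 0, 0, 0, 0, 1, 1, 0, 0, 0, 0, 0, 0, 1, 1, 0],
 [0, 0, 0, 0, 0, 0, 0, 0, 0, 0, 0, 0, 0, 0, 0, 0],
 [0, 0, 0, 0, 0, 0, 0, 0, 0, 0, 0, 0, 0, 0, 0, 0],
 [0, 0, 0, 0, 0, 0, 0, 0, 0, 0, 0, 0, 0, 0, 0, 0],
 [0, 0, 0, 0, 0, 0, 0, 0, 0, 0, 0, 0, 0, 0, 0, 0],
 [0, 0, 0, 0, 0, 0, 0, 0, 0, 0, 0, 0, 0, 0, 0, 0],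
 [0, 0, 0, 0, 0, 1, 1, 0, 0, 0, 0, 0, 0, 1, 1, 0],
 [0, 0, 0, 0, 0, 0, 0, 0, 0, 0, 0, 0, 0, 0, 0, 0],
 [0, 0, 0, 0, 0, 1, 1, 0, 0, 0, 0, 0, 0, 1, 1, 0]]


def CD4 (a : Fin 32) (b : Fin 16) : ℤ := (CD4L.getD a []).getD b 0
def CD5 (a : Fin 64) (b : Fin 32) : ℤ := (CD5L.getD a []).getD b 0
def HM (a : Fin 16) (b : Fin 32) : ℤ := (HML.getD a []).getD b 0
def KM (a : Fin 32) (b : Fin 64) : ℤ := (KML.getD a []).getD b 0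
def zc (a : Fin 32) : ℤ := zcL.getD a 0
def wc (a : Fin 64) : ℤ := wcL.getD a 0
def psi (a : Fin 32) : ℤ := psiL.getD a 0

/-! #### The differential as an integer matrix -/

def coefD (n : ℕ) (g : Fin (n+1) → Gg) (τ : Fin n → Gg) : ℤ :=
  (if τ = fun i => g i.succ then 1 else 0) +
    ∑ j : Fin (n + 1), (-1 : ℤ) ^ ((j : ℕ) + 1) *
      (if τ = Fin.contractNth j (· * ·) g then 1 else 0)

lemma sum_delta_smul {M : Type} [AddCommGroup M] {n : ℕ} (a : Fin n → Gg)
    (f : (Fin n → Gg) → M) :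
    (∑ τ : Fin n → Gg, (if τ = a then (1:ℤ) else 0) • f τ) = f a := by
  have h : ∀ τ : Fin n → Gg, (if τ = a then (1:ℤ) else 0) • f τ
      = (if τ = a then f τ else 0) := by
    intro τ; split <;> simp
  rw [Finset.sum_congr rfl fun τ _ => h τ, Finset.sum_ite_eq' Finset.univ a f,
    if_pos (Finset.mem_univ a)]

lemma dFun_eq_sum {M : Type} [AddCommGroup M] (n : ℕ) (f : cochain Gg M n)
    (g : Fin (n+1) → Gg) :
    dFun Gg M n f g = ∑ τ : Fin n → Gg, coefD n g τ • f τ := by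
  have step : ∀ τ : Fin n → Gg, coefD n g τ • f τ
      = (if τ = (fun i => g i.succ) then (1:ℤ) else 0) • f τ
        + ∑ j : Fin (n+1), ((-1:ℤ) ^ ((j:ℕ)+1)) •
            ((if τ = Fin.contractNth j (· * ·) g then (1:ℤ) else 0) • f τ) := by
    intro τ
    simp only [coefD, add_smul, Finset.sum_smul, mul_smul]
  have hB : ∀ j : Fin (n+1), (∑ τ : Fin n → Gg, ((-1:ℤ) ^ ((j:ℕ)+1)) •
      ((if τ = Fin.contractNth j (· * ·) g then (1:ℤ) else 0) • f τ))
      = ((-1:ℤ) ^ ((j:ℕ)+1)) • f (Fin.contractNth j (· * ·) g) := by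
    intro j
    rw [← Finset.smul_sum, sum_delta_smul]
  rw [Finset.sum_congr rfl fun τ _ => step τ, Finset.sum_add_distrib, sum_delta_smul,
    Finset.sum_comm, Finset.sum_congr rfl fun j _ => hB j]
  rfl

/-! #### Certificate identities, checked by `decide` -/

set_option maxRecDepth 1000000 in
lemma CD4_eq : ∀ (g : Fin 5 → Gg) (x : Fin 4 → Gg),
    coefD 4 g x = CD4 (enc5 g) (enc4 x) := by decide

set_option maxRecDepth 1000000 in
set_option maxHeartbeats 4000000 in
lemma CD5_eq : ∀ (g : Fin 6 → Gg) (x : Fin 5 → Gg),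
    coefD 5 g x = CD5 (enc6 g) (enc5 x) := by decide

set_option maxRecDepth 1000000 in
set_option maxHeartbeats 4000000 in
lemma MAIN_raw : ∀ a b : Fin 32,
    (if b = a then (1:ℤ) else 0) =
      (∑ x : Fin 16, CD4 a x * HM x b) +
        ((∑ y : Fin 64, KM a y * CD5 y b) + psi a * zc b) := by decide

set_option maxRecDepth 1000000 in
lemma ZD4 : ∀ x : Fin 16, (∑ a : Fin 32, zc a * CD4 a x) = 0 := by decide

set_option maxRecDepth 1000000 in
lemma WD5 : ∀ b : Fin 32, (∑ y : Fin 64, wc y * CD5 y b) = 2 * zc b := by decide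

/-! #### The degree-5 invariant `Phi` -/

def Phi {M : Type} [AddCommGroup M] (f : cochain Gg M 5) : M :=
  ∑ τ : Fin 5 → Gg, zc (enc5 τ) • f τ

lemma sum_CD5_smul {M : Type} [AddCommGroup M] (f : cochain Gg M 5)
    (hf : dFun Gg M 5 f = 0) (y : Fin 64) :
    (∑ τ : Fin 5 → Gg, CD5 y (enc5 τ) • f τ) = 0 := by
  have hc : ∀ τ : Fin 5 → Gg, CD5 y (enc5 τ) • f τ = coefD 5 (dec6 y) τ • f τ := by
    intro τ
    have h := CD5_eq (dec6 y) τ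
    rw [encdec6 y] at h
    rw [h]
  rw [Finset.sum_congr rfl fun τ _ => hc τ, ← dFun_eq_sum, hf]
  rfl

lemma Phi_dFun {M : Type} [AddCommGroup M] (b : cochain Gg M 4) :
    Phi (dFun Gg M 4 b) = 0 := by
  unfold Phi
  have h1 : ∀ τ : Fin 5 → Gg, zc (enc5 τ) • dFun Gg M 4 b τ
      = ∑ x : Fin 4 → Gg, (zc (enc5 τ) * coefD 4 τ x) • b x := by
    intro τ
    rw [dFun_eq_sum, Finset.smul_sum]
    exact Finset.sum_congr rfl fun x _ => (mul_smul _ _ _).symm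
  rw [Finset.sum_congr rfl fun τ _ => h1 τ, Finset.sum_comm]
  have h2 : ∀ x : Fin 4 → Gg,
      (∑ τ : Fin 5 → Gg, (zc (enc5 τ) * coefD 4 τ x) • b x) = 0 := by
    intro x
    rw [← Finset.sum_smul]
    have hz : (∑ τ : Fin 5 → Gg, zc (enc5 τ) * coefD 4 τ x) = 0 := by
      have hc : ∀ τ : Fin 5 → Gg, zc (enc5 τ) * coefD 4 τ x
          = zc (e5 τ) * CD4 (e5 τ) (enc4 x) := fun τ => by rw [CD4_eq]; rfl
      rw [Finset.sum_congr rfl fun τ _ => hc τ,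
        Equiv.sum_comp e5 (fun a => zc a * CD4 a (enc4 x))]
      exact ZD4 (enc4 x)
    rw [hz, zero_smul]
  rw [Finset.sum_congr rfl fun x _ => h2 x, Finset.sum_const_zero]

lemma two_Phi {M : Type} [AddCommGroup M] (f : cochain Gg M 5)
    (hf : dFun Gg M 5 f = 0) : (2:ℤ) • Phi f = 0 := by
  unfold Phi
  rw [Finset.smul_sum]
  have h1 : ∀ τ : Fin 5 → Gg, (2:ℤ) • (zc (enc5 τ) • f τ)
      = ∑ y : Fin 64, (wc y) • (CD5 y (enc5 τ) • f τ) := by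
    intro τ
    rw [← mul_smul, ← WD5 (enc5 τ), Finset.sum_smul]
    exact Finset.sum_congr rfl fun y _ => (mul_smul _ _ _)
  rw [Finset.sum_congr rfl fun τ _ => h1 τ, Finset.sum_comm]
  have h2 : ∀ y : Fin 64,
      (∑ τ : Fin 5 → Gg, (wc y) • (CD5 y (enc5 τ) • f τ)) = 0 := by
    intro y
    rw [← Finset.smul_sum, sum_CD5_smul f hf y, smul_zero]
  rw [Finset.sum_congr rfl fun y _ => h2 y, Finset.sum_const_zero]

/-! #### The explicit homotopy -/

def Hmap {M : Type} [AddCommGroup M] (f : cochain Gg M 5) : cochain Gg M 4 :=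
  fun x => ∑ τ : Fin 5 → Gg, HM (enc4 x) (enc5 τ) • f τ

lemma homotopy {M : Type} [AddCommGroup M] (f : cochain Gg M 5)
    (hf : dFun Gg M 5 f = 0) (hphi : Phi f = 0) :
    dFun Gg M 4 (Hmap f) = f := by
  funext g
  rw [dFun_eq_sum]
  have h1 : ∀ x : Fin 4 → Gg, coefD 4 g x • Hmap f x
      = ∑ τ : Fin 5 → Gg, (coefD 4 g x * HM (enc4 x) (enc5 τ)) • f τ := by
    intro x
    unfold Hmap
    rw [Finset.smul_sum]
    exact Finset.sum_congr rfl fun τ _ => (mul_smul _ _ _).symm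
  rw [Finset.sum_congr rfl fun x _ => h1 x, Finset.sum_comm]
  have h2 : ∀ τ : Fin 5 → Gg,
      (∑ x : Fin 4 → Gg, (coefD 4 g x * HM (enc4 x) (enc5 τ)) • f τ)
        = (∑ x : Fin 16, CD4 (enc5 g) x * HM x (enc5 τ)) • f τ := by
    intro τ
    rw [← Finset.sum_smul]
    congr 1
    have hc : ∀ x : Fin 4 → Gg, coefD 4 g x * HM (enc4 x) (enc5 τ)
        = CD4 (enc5 g) (e4 x) * HM (e4 x) (enc5 τ) := fun x => by rw [CD4_eq]; rfl
    rw [Finset.sum_congr rfl fun x _ => hc x]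
    exact Equiv.sum_comp e4 (fun a => CD4 (enc5 g) a * HM a (enc5 τ))
  rw [Finset.sum_congr rfl fun τ _ => h2 τ]
  have h3 : ∀ τ : Fin 5 → Gg,
      (∑ x : Fin 16, CD4 (enc5 g) x * HM x (enc5 τ)) • f τ
        = (if τ = g then (1:ℤ) else 0) • f τ
          - (∑ y : Fin 64, (KM (enc5 g) y) • (CD5 y (enc5 τ) • f τ))
          - psi (enc5 g) • (zc (enc5 τ) • f τ) := by
    intro τ
    have hm := MAIN_raw (enc5 g) (enc5 τ)
    have hδ : (if enc5 τ = enc5 g then (1:ℤ) else 0) = (if τ = g then (1:ℤ) else 0) := by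
      refine if_congr ?_ rfl rfl
      exact ⟨fun h => e5.injective h, fun h => by rw [h]⟩
    have hcoef : (∑ x : Fin 16, CD4 (enc5 g) x * HM x (enc5 τ))
        = (if τ = g then (1:ℤ) else 0)
          - (∑ y : Fin 64, KM (enc5 g) y * CD5 y (enc5 τ))
          - psi (enc5 g) * zc (enc5 τ) := by
      rw [← hδ]; omega
    rw [hcoef, sub_smul, sub_smul]
    congr 1
    · congr 1
      rw [Finset.sum_smul]
      exact Finset.sum_congr rfl fun y _ => (mul_smul _ _ _)
    · exact mul_smul _ _ _
  rw [Finset.sum_congr rfl fun τ _ => h3 τ, Finset.sum_sub_distrib,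
    Finset.sum_sub_distrib, sum_delta_smul]
  have hB : (∑ τ : Fin 5 → Gg,
      ∑ y : Fin 64, (KM (enc5 g) y) • (CD5 y (enc5 τ) • f τ)) = 0 := by
    rw [Finset.sum_comm]
    have : ∀ y : Fin 64,
        (∑ τ : Fin 5 → Gg, (KM (enc5 g) y) • (CD5 y (enc5 τ) • f τ)) = 0 := by
      intro y
      rw [← Finset.smul_sum, sum_CD5_smul f hf y, smul_zero]
    rw [Finset.sum_congr rfl fun y _ => this y, Finset.sum_const_zero]
  have hC : (∑ τ : Fin 5 → Gg, psi (enc5 g) • (zc (enc5 τ) • f τ)) = 0 := by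
    rw [← Finset.smul_sum]
    have : (∑ τ : Fin 5 → Gg, zc (enc5 τ) • f τ) = Phi f := rfl
    rw [this, hphi, smul_zero]
  rw [hB, hC, sub_zero, sub_zero]

/-! #### Post-composition with an additive map commutes with the differential -/

lemma dFun_postcomp {G : Type} [Group G] {M N : Type} [AddCommGroup M] [AddCommGroup N]
    (φ : M →+ N) (n : ℕ) (c : cochain G M n) :
    dFun G N n (fun x => φ (c x)) = fun g => φ (dFun G M n c g) := by
  funext g
  simp only [dFun, map_add, map_sum, map_zsmul]

/-! #### The generator `ω` -/

def ω₂ : cochain Gg (ZMod 2) 5 := fun g => if g = (fun _ => tG) then 1 else 0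

set_option maxRecDepth 100000 in
lemma ω₂_cocycle : dFun Gg (ZMod 2) 5 ω₂ = 0 := by decide

noncomputable def ι : ZMod 2 →+ UOne :=
  ZMod.lift 2 ⟨zmultiplesHom UOne (((1:ℝ)/2 : ℝ) : UOne), by
    rw [zmultiplesHom_apply,
      ← AddCircle.coe_zsmul (p := (1:ℝ)) (n := ((2:ℕ):ℤ)) (x := (1:ℝ)/2)]
    have h1 : (((2:ℕ):ℤ) • ((1:ℝ)/2) : ℝ) = 1 := by rw [zsmul_eq_mul]; norm_num
    rw [h1]
    exact AddCircle.coe_period (1:ℝ)⟩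

lemma ι_one : ι 1 = (((1:ℝ)/2 : ℝ) : UOne) := by
  have h : ((1:ℤ) : ZMod 2) = 1 := Int.cast_one
  rw [← h]
  unfold ι
  rw [ZMod.lift_coe]
  rw [zmultiplesHom_apply, one_zsmul]

lemma ι_one_ne : ι 1 ≠ 0 := by
  rw [ι_one]
  intro h
  rw [AddCircle.coe_eq_zero_iff] at h
  obtain ⟨n, hn⟩ := h
  rw [zsmul_eq_mul, mul_one] at hn
  have h2 : ((2 * n : ℤ) : ℝ) = 1 := by push_cast; linarith
  have h3 : (2 * n : ℤ) = 1 := by exact_mod_cast h2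
  omega

lemma torsion2 (x : UOne) (hx : (2:ℤ) • x = 0) : x = 0 ∨ x = ι 1 := by
  induction x using QuotientAddGroup.induction_on with
  | H r =>
    rw [← AddCircle.coe_zsmul, AddCircle.coe_eq_zero_iff] at hx
    obtain ⟨n, hn⟩ := hx
    rw [zsmul_eq_mul, mul_one, zsmul_eq_mul] at hn
    push_cast at hn
    rcases Int.even_or_odd n with ⟨k, hk⟩ | ⟨k, hk⟩
    · left
      rw [AddCircle.coe_eq_zero_iff]
      refine ⟨k, ?_⟩
      rw [zsmul_eq_mul, mul_one]
      have : ((n:ℝ)) = (k:ℝ) + (k:ℝ) := by rw [hk]; push_cast; ring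
      linarith
    · right
      rw [ι_one]
      have hr : ((r - (1:ℝ)/2 : ℝ) : UOne) = 0 := by
        rw [AddCircle.coe_eq_zero_iff]
        refine ⟨k, ?_⟩
        rw [zsmul_eq_mul, mul_one]
        have : ((n:ℝ)) = 2*(k:ℝ) + 1 := by rw [hk]; push_cast; ring
        linarith
      rw [AddCircle.coe_sub] at hr
      exact sub_eq_zero.mp hr

noncomputable def ωc : cochain Gg UOne 5 := fun g => ι (ω₂ g)

lemma ωc_cocycle : dFun Gg UOne 5 ωc = 0 := by
  have h := dFun_postcomp (G := Gg) ι 5 ω₂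
  unfold ωc
  rw [h, ω₂_cocycle]
  funext g
  exact map_zero ι

set_option maxRecDepth 100000 in
lemma Phi_ω₂ : (∑ τ : Fin 5 → Gg, zc (enc5 τ) • ω₂ τ) = 1 := by decide

lemma Phi_ωc : Phi ωc = ι 1 := by
  unfold Phi ωc
  have h1 : ∀ τ : Fin 5 → Gg, zc (enc5 τ) • ι (ω₂ τ) = ι (zc (enc5 τ) • ω₂ τ) :=
    fun τ => (map_zsmul ι _ _).symm
  rw [Finset.sum_congr rfl fun τ _ => h1 τ, ← map_sum, Phi_ω₂]

lemma ωc_add_self : ωc + ωc = 0 := by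
  funext g
  show ι (ω₂ g) + ι (ω₂ g) = 0
  rw [← map_add]
  have h : ∀ a : ZMod 2, a + a = 0 := by decide
  rw [h (ω₂ g), map_zero]

/-! #### Classification of 5-cocycles -/

lemma classify (f : cochain Gg UOne 5) (hf : dFun Gg UOne 5 f = 0) :
    (∃ b, dFun Gg UOne 4 b = f) ∨ (∃ b, dFun Gg UOne 4 b = f - ωc) := by
  rcases torsion2 (Phi f) (two_Phi f hf) with h | h
  · exact Or.inl ⟨Hmap f, homotopy f hf h⟩
  · right
    have hsub : dFun Gg UOne 5 (f - ωc) = 0 := by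
      have hmap : dFun Gg UOne 5 (f - ωc) = dFun Gg UOne 5 f - dFun Gg UOne 5 ωc :=
        map_sub (dHom Gg UOne 5) f ωc
      rw [hmap, hf, ωc_cocycle, sub_zero]
    have hphi : Phi (f - ωc) = 0 := by
      have hps : Phi (f - ωc) = Phi f - Phi ωc := by
        unfold Phi
        rw [← Finset.sum_sub_distrib]
        exact Finset.sum_congr rfl fun τ _ => by rw [Pi.sub_apply, smul_sub]
      rw [hps, h, Phi_ωc, sub_self]
    exact ⟨Hmap (f - ωc), homotopy _ hsub hphi⟩

/-! #### The quotient -/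

lemma mk_eq_zero_iff {G : Type} [Group G] (x : (dHom G UOne 5).ker) :
    (QuotientAddGroup.mk x : groupCohSucc G UOne 4) = 0 ↔
      ∃ b : cochain G UOne 4, dFun G UOne 4 b = (x : cochain G UOne 5) := by
  rw [QuotientAddGroup.eq_zero_iff]
  simp only [AddSubgroup.mem_comap, AddMonoidHom.mem_range, AddSubgroup.coe_subtype]
  constructor
  · rintro ⟨b, hb⟩; exact ⟨b, hb⟩
  · rintro ⟨b, hb⟩; exact ⟨b, hb⟩

lemma ωc_mem_ker : ωc ∈ (dHom Gg UOne 5).ker := by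
  have h : dHom Gg UOne 5 ωc = 0 := ωc_cocycle
  exact AddMonoidHom.mem_ker.mpr h

noncomputable def Ω : groupCohSucc Gg UOne 4 := QuotientAddGroup.mk ⟨ωc, ωc_mem_ker⟩

lemma two_Omega : zmultiplesHom (groupCohSucc Gg UOne 4) Ω ((2:ℕ):ℤ) = 0 := by
  rw [zmultiplesHom_apply, show ((2:ℕ):ℤ) = (2:ℤ) from rfl, two_zsmul]
  show QuotientAddGroup.mk _ + QuotientAddGroup.mk _ = 0
  rw [← QuotientAddGroup.mk_add]
  have hx : (⟨ωc, ωc_mem_ker⟩ + ⟨ωc, ωc_mem_ker⟩ : (dHom Gg UOne 5).ker) = 0 :=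
    Subtype.ext ωc_add_self
  rw [hx]
  rfl

noncomputable def E : ZMod 2 →+ groupCohSucc Gg UOne 4 :=
  ZMod.lift 2 ⟨zmultiplesHom _ Ω, two_Omega⟩

lemma E_one : E 1 = Ω := by
  have h : ((1:ℤ) : ZMod 2) = 1 := Int.cast_one
  rw [← h]
  unfold E
  rw [ZMod.lift_coe, zmultiplesHom_apply, one_zsmul]

lemma E_surj : Function.Surjective E := by
  intro α
  obtain ⟨x, rfl⟩ := QuotientAddGroup.mk_surjective α
  obtain ⟨f, hfk⟩ := x
  have hf : dFun Gg UOne 5 f = 0 := hfk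
  rcases classify f hf with ⟨b, hb⟩ | ⟨b, hb⟩
  · refine ⟨0, ?_⟩
    rw [map_zero]
    exact ((mk_eq_zero_iff ⟨f, hfk⟩).mpr ⟨b, hb⟩).symm
  · refine ⟨1, ?_⟩
    rw [E_one]
    show QuotientAddGroup.mk _ = QuotientAddGroup.mk _
    rw [QuotientAddGroup.eq]
    refine ⟨b, ?_⟩
    show dFun Gg UOne 4 b = _
    rw [hb]
    show f - ωc = -ωc + f
    abel

lemma E_inj : Function.Injective E := by
  have hker : ∀ x : ZMod 2, E x = 0 → x = 0 := by
    intro x hx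
    have h01 : ∀ y : ZMod 2, y = 0 ∨ y = 1 := by decide
    rcases h01 x with rfl | rfl
    · rfl
    · exfalso
      rw [E_one] at hx
      obtain ⟨b, hb⟩ := (mk_eq_zero_iff ⟨ωc, ωc_mem_ker⟩).mp hx
      have hphi : Phi (dFun Gg UOne 4 b) = Phi ωc := by rw [hb]
      rw [Phi_dFun, Phi_ωc] at hphi
      exact ι_one_ne hphi.symm
  intro a b hab
  have h : E (a - b) = 0 := by rw [map_sub, hab, sub_self]
  have h2 : a - b = 0 := hker _ h
  exact sub_eq_zero.mp h2

/-! #### Part 2 : the pullback to `ℤ/4` -/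

def b2 : cochain G4 (ZMod 2) 4 := fun g =>
  ((b2LL.getD ((Multiplicative.toAdd (g 0)).val + 4 * (Multiplicative.toAdd (g 1)).val) []).getD
    ((Multiplicative.toAdd (g 2)).val + 4 * (Multiplicative.toAdd (g 3)).val) 0 : ZMod 2)

set_option maxRecDepth 1000000 in
set_option maxHeartbeats 4000000 in
lemma hb2' : ∀ a b c d e : G4, dFun G4 (ZMod 2) 4 b2 ![a,b,c,d,e] =
    ω₂ ((redHom 2 4 ⟨2, rfl⟩) ∘ ![a,b,c,d,e]) := by decide

lemma hb2 (h : (2:ℕ) ∣ 4) : dFun G4 (ZMod 2) 4 b2 =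
    fun x => ω₂ ((redHom 2 4 h) ∘ x) := by
  funext g
  have hg : ![g 0, g 1, g 2, g 3, g 4] = g := by
    funext i; fin_cases i <;> rfl
  have h5 := hb2' (g 0) (g 1) (g 2) (g 3) (g 4)
  rw [hg] at h5
  exact h5

lemma pullback_ωc (h : (2:ℕ) ∣ 4) :
    ∃ b : cochain G4 UOne 4,
      dFun G4 UOne 4 b = cochainComp (redHom 2 4 h) UOne 5 ωc := by
  refine ⟨fun x => ι (b2 x), ?_⟩
  rw [dFun_postcomp (G := G4) ι 4 b2, hb2 h]
  rfl

lemma pullback_kills (h : (2:ℕ) ∣ 4) (α : groupCohSucc Gg UOne 4) :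
    cohMapSucc (redHom 2 4 h) UOne 4 α = 0 := by
  obtain ⟨x, rfl⟩ := QuotientAddGroup.mk_surjective α
  obtain ⟨f, hfk⟩ := x
  have hf : dFun Gg UOne 5 f = 0 := hfk
  have hmapmk : cohMapSucc (redHom 2 4 h) UOne 4 (QuotientAddGroup.mk ⟨f, hfk⟩)
      = QuotientAddGroup.mk (cocycleComp (redHom 2 4 h) UOne 4 ⟨f, hfk⟩) :=
    QuotientAddGroup.map_mk _ _ _ _ _
  rw [hmapmk]
  rw [mk_eq_zero_iff]
  obtain ⟨bω, hbω⟩ := pullback_ωc h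
  rcases classify f hf with ⟨b, hb⟩ | ⟨b, hb⟩
  · refine ⟨cochainComp (redHom 2 4 h) UOne 4 b, ?_⟩
    show dFun G4 UOne 4 _ = cochainComp (redHom 2 4 h) UOne 5 f
    rw [dFun_comp, hb]
  · refine ⟨cochainComp (redHom 2 4 h) UOne 4 b + bω, ?_⟩
    show dFun G4 UOne 4 _ = cochainComp (redHom 2 4 h) UOne 5 f
    have hadd : dFun G4 UOne 4 (cochainComp (redHom 2 4 h) UOne 4 b + bω)
        = dFun G4 UOne 4 (cochainComp (redHom 2 4 h) UOne 4 b) + dFun G4 UOne 4 bω :=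
      map_add (dHom G4 UOne 4) _ _
    rw [hadd, dFun_comp, hb, hbω,
      map_sub (cochainComp (redHom 2 4 h) UOne 5) f ωc]
    abel

end Stmt11

/-- `H⁵(ℤ/2; U(1)) ≅ ℤ/2`, and the pullback along the quotient map
`ℤ/4 → ℤ/2` annihilates all of `H⁵(ℤ/2; U(1))`. -/
theorem statement_11 :
    Nonempty (groupCohSucc (Multiplicative (ZMod 2)) UOne 4 ≃+ ZMod 2) ∧
    ∀ α : groupCohSucc (Multiplicative (ZMod 2)) UOne 4,
      cohMapSucc (redHom 2 4 (by norm_num)) UOne 4 α = 0 := by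
  constructor
  · exact ⟨(AddEquiv.ofBijective Stmt11.E ⟨Stmt11.E_inj, Stmt11.E_surj⟩).symm⟩
  · intro α
    exact Stmt11.pullback_kills (by norm_num) α
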